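/- There exists a constant Ξ > 1 with the following property: for every integer 1 ≤ k ≤ q, every point x ∈ Ω with −2Ξ^{−1} ≤ u_k(x) ≤ 0, and all nonnegative real numbers a_0, …, a_{k−1} such that a_i = 0 for every 0 ≤ i ≤ k−1 with u_i(x) ≤ −2Ξ^{−1}, one has Σ_{i=0}^{k−1} a_i ≤ Ξ · |(Σ_{i=0}^{k−1} a_i N_i) ∧ N_k|. -/
import Mathlib

open scoped RealInnerProductSpace

set_option maxHeartbeats 2000000 in
theorem stmt_2 (n q : ℕ) (hn : 3 ≤ n) (hq : 1 ≤ q)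
    (u : ℕ → EuclideanSpace ℝ (Fin n) → ℝ)
    (N : ℕ → EuclideanSpace ℝ (Fin n)) (c : ℕ → ℝ)
    (hN : ∀ k ≤ q, ‖N k‖ = 1)
    (hu : ∀ k ≤ q, ∀ x, u k x = ⟪N k, x⟫ + c k)
    (Ω : Set (EuclideanSpace ℝ (Fin n)))
    (hΩ : Ω = {x | ∀ m ≤ q, u m x ≤ 0})
    (hcomp : IsCompact Ω) (hint : (interior Ω).Nonempty)
    (hA : ∀ k ≤ q, ∃ x, 0 < u k x ∧ ∀ m ≤ q, m ≠ k → u m x ≤ 0)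
    (hB : ∀ j k, j < k → k ≤ q → (∃ x ∈ Ω, u j x = 0 ∧ u k x = 0) →
      ⟪N j, N k⟫ ≤ 0) :
    ∃ Ξ : ℝ, 1 < Ξ ∧ ∀ k, 1 ≤ k → k ≤ q → ∀ x ∈ Ω,
      -2 * Ξ⁻¹ ≤ u k x → u k x ≤ 0 → ∀ a : ℕ → ℝ,
      (∀ i < k, 0 ≤ a i) →
      (∀ i < k, u i x ≤ -2 * Ξ⁻¹ → a i = 0) →
      ∑ i ∈ Finset.range k, a i ≤
        Ξ * Real.sqrt (‖∑ i ∈ Finset.range k, a i • N i‖ ^ 2 * ‖N k‖ ^ 2 -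
          ⟪∑ i ∈ Finset.range k, a i • N i, N k⟫ ^ 2) := by
  classical
  obtain ⟨y, hy⟩ := hint
  obtain ⟨δ, hδ, hball⟩ := Metric.mem_nhds_iff.mp (mem_interior_iff_mem_nhds.mp hy)
  have hyneg : ∀ m ≤ q, u m y ≤ -(δ/2) := by
    intro m hm
    have hmem : y + (δ/2) • N m ∈ Ω := by
      apply hball
      have : dist (y + (δ/2) • N m) y = ‖(δ/2) • N m‖ := by
        rw [dist_eq_norm]; congr 1; abel
      rw [Metric.mem_ball, this, norm_smul, hN m hm]
      rw [Real.norm_eq_abs, abs_of_pos (by linarith)]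
      linarith
    rw [hΩ] at hmem
    have h1 := hmem m hm
    rw [hu m hm] at h1
    rw [inner_add_right, real_inner_smul_right, real_inner_self_eq_norm_sq, hN m hm] at h1
    rw [hu m hm]
    nlinarith
  have hdiff : ∀ m ≤ q, ∀ x, ⟪N m, y - x⟫ = u m y - u m x := by
    intro m hm x
    rw [inner_sub_right, hu m hm y, hu m hm x]; ring
  -- key uniform lemma for each k
  have key : ∀ k : ℕ, ∃ ε : ℝ, 0 < ε ∧ ∃ cc : ℝ, 0 < cc ∧ (1 ≤ k → k ≤ q →
      ∀ x ∈ Ω, -ε ≤ u k x → ∀ b : Fin k → ℝ, (∀ i, 0 ≤ b i) → (∑ i, b i) = 1 →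
      (∀ i : Fin k, b i = 0 ∨ -ε ≤ u (i : ℕ) x) →
      cc ≤ Real.sqrt (‖∑ i : Fin k, b i • N i‖ ^ 2 * ‖N k‖ ^ 2 -
        ⟪∑ i : Fin k, b i • N i, N k⟫ ^ 2)) := by
    intro k
    by_cases hk : 1 ≤ k ∧ k ≤ q
    swap
    · exact ⟨1, one_pos, 1, one_pos, fun h1 h2 => absurd ⟨h1, h2⟩ hk⟩
    obtain ⟨hk1, hkq⟩ := hk
    have hiq : ∀ i : Fin k, (i : ℕ) ≤ q := fun i => le_trans i.isLt.le hkq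
    set V : (Fin k → ℝ) → EuclideanSpace ℝ (Fin n) := fun b => ∑ i, b i • N i with hV
    set f : EuclideanSpace ℝ (Fin n) × (Fin k → ℝ) → ℝ := fun p =>
      Real.sqrt (‖V p.2‖ ^ 2 * ‖N k‖ ^ 2 - ⟪V p.2, N k⟫ ^ 2) with hf
    set K : ℝ → Set (EuclideanSpace ℝ (Fin n) × (Fin k → ℝ)) := fun ε =>
      {p | p.1 ∈ Ω ∧ (∀ i, 0 ≤ p.2 i) ∧ (∑ i, p.2 i) = 1 ∧ -ε ≤ u k p.1 ∧
        ∀ i : Fin k, p.2 i = 0 ∨ -ε ≤ u (i : ℕ) p.1} with hK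
    suffices h : ∃ ε : ℝ, 0 < ε ∧ ∃ cc : ℝ, 0 < cc ∧ ∀ p ∈ K ε, cc ≤ f p by
      obtain ⟨ε, hε, cc, hcc, hP⟩ := h
      exact ⟨ε, hε, cc, hcc, fun _ _ x hx hux b hb0 hbs hbact =>
        hP (x, b) ⟨hx, hb0, hbs, hux, hbact⟩⟩
    have hVcont : Continuous V := continuous_finset_sum _ fun i _ =>
      (continuous_apply i).smul continuous_const
    have hfcont : Continuous f := by
      apply Real.continuous_sqrt.comp
      exact (((hVcont.comp continuous_snd).norm.pow 2).mul continuous_const).sub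
        (((hVcont.comp continuous_snd).inner continuous_const).pow 2)
    have hucont : ∀ m, m ≤ q → Continuous fun x : EuclideanSpace ℝ (Fin n) => u m x := by
      intro m hm
      have h1 : (fun x : EuclideanSpace ℝ (Fin n) => u m x) = fun x => ⟪N m, x⟫ + c m := funext (hu m hm)
      rw [h1]
      exact (continuous_const.inner continuous_id).add continuous_const
    have hKclosed : ∀ ε : ℝ, IsClosed (K ε) := by
      intro ε
      have h1 : IsClosed {p : EuclideanSpace ℝ (Fin n) × (Fin k → ℝ) | p.1 ∈ Ω} :=
        hcomp.isClosed.preimage continuous_fst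
      have h2 : IsClosed {p : EuclideanSpace ℝ (Fin n) × (Fin k → ℝ) | ∀ i, 0 ≤ p.2 i} := by
        have he : {p : EuclideanSpace ℝ (Fin n) × (Fin k → ℝ) | ∀ i, 0 ≤ p.2 i} =
            ⋂ i, {p : EuclideanSpace ℝ (Fin n) × (Fin k → ℝ) | 0 ≤ p.2 i} := by ext p; simp
        rw [he]
        exact isClosed_iInter fun i =>
          isClosed_le continuous_const ((continuous_apply i).comp continuous_snd)
      have h3 : IsClosed {p : EuclideanSpace ℝ (Fin n) × (Fin k → ℝ) | (∑ i, p.2 i) = 1} :=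
        isClosed_eq (continuous_finset_sum _ fun i _ =>
          (continuous_apply i).comp continuous_snd) continuous_const
      have h4 : IsClosed {p : EuclideanSpace ℝ (Fin n) × (Fin k → ℝ) | -ε ≤ u k p.1} :=
        isClosed_le continuous_const ((hucont k hkq).comp continuous_fst)
      have h5 : IsClosed {p : EuclideanSpace ℝ (Fin n) × (Fin k → ℝ) |
          ∀ i : Fin k, p.2 i = 0 ∨ -ε ≤ u (i : ℕ) p.1} := by
        have he : {p : EuclideanSpace ℝ (Fin n) × (Fin k → ℝ) | ∀ i : Fin k, p.2 i = 0 ∨ -ε ≤ u (i : ℕ) p.1} =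
            ⋂ i : Fin k, ({p : EuclideanSpace ℝ (Fin n) × (Fin k → ℝ) | p.2 i = 0} ∪
              {p : EuclideanSpace ℝ (Fin n) × (Fin k → ℝ) | -ε ≤ u (i : ℕ) p.1}) := by
          ext p; simp
        rw [he]
        exact isClosed_iInter fun i =>
          (isClosed_eq ((continuous_apply i).comp continuous_snd) continuous_const).union
            (isClosed_le continuous_const ((hucont i (hiq i)).comp continuous_fst))
      have he : K ε = {p : EuclideanSpace ℝ (Fin n) × (Fin k → ℝ) | p.1 ∈ Ω} ∩
          ({p : EuclideanSpace ℝ (Fin n) × (Fin k → ℝ) | ∀ i, 0 ≤ p.2 i} ∩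
          ({p : EuclideanSpace ℝ (Fin n) × (Fin k → ℝ) | (∑ i, p.2 i) = 1} ∩
          ({p : EuclideanSpace ℝ (Fin n) × (Fin k → ℝ) | -ε ≤ u k p.1} ∩
           {p : EuclideanSpace ℝ (Fin n) × (Fin k → ℝ) | ∀ i : Fin k, p.2 i = 0 ∨ -ε ≤ u (i : ℕ) p.1}))) := by
        ext p
        simp only [hK, Set.mem_setOf_eq, Set.mem_inter_iff]
      rw [he]
      exact h1.inter (h2.inter (h3.inter (h4.inter h5)))
    have hKcomp : ∀ ε : ℝ, IsCompact (K ε) := by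
      intro ε
      apply IsCompact.of_isClosed_subset
        (hcomp.prod (isCompact_Icc (a := (0 : Fin k → ℝ)) (b := 1)))
        (hKclosed ε)
      rintro ⟨x, b⟩ ⟨hx, hb0, hbs, -, -⟩
      refine ⟨hx, ?_, ?_⟩
      · intro i; exact hb0 i
      · intro i
        calc b i ≤ ∑ j, b j :=
              Finset.single_le_sum (fun j _ => hb0 j) (Finset.mem_univ i)
          _ = 1 := hbs
    by_contra hcon
    push_neg at hcon
    set εj : ℕ → ℝ := fun j => 1 / (j + 1) with hεj
    have hεjpos : ∀ j : ℕ, (0 : ℝ) < εj j := fun j => by positivity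
    set t : ℕ → Set (EuclideanSpace ℝ (Fin n) × (Fin k → ℝ)) := fun j => K (εj j) ∩ f ⁻¹' Set.Iic 0 with ht
    have htne : ∀ j, (t j).Nonempty := by
      intro j
      obtain ⟨p1, hp1, -⟩ := hcon (εj j) (hεjpos j) 1 one_pos
      obtain ⟨p0, hp0K, hp0min⟩ := (hKcomp (εj j)).exists_isMinOn ⟨p1, hp1⟩
        hfcont.continuousOn
      refine ⟨p0, hp0K, ?_⟩
      simp only [Set.mem_preimage, Set.mem_Iic]
      by_contra hpos0
      push_neg at hpos0
      obtain ⟨p2, hp2K, hp2⟩ := hcon (εj j) (hεjpos j) (f p0) hpos0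
      exact absurd (hp0min hp2K) (not_le.mpr hp2)
    have hεmono : ∀ j : ℕ, εj (j + 1) ≤ εj j := by
      intro j
      rw [hεj]
      apply one_div_le_one_div_of_le
      · positivity
      · push_cast; linarith
    have htsub : ∀ j, t (j + 1) ⊆ t j := by
      intro j
      rintro ⟨x, b⟩ ⟨⟨hx, hb0, hbs, huk, hact⟩, hf0⟩
      have hm : -εj j ≤ -εj (j + 1) := neg_le_neg (hεmono j)
      exact ⟨⟨hx, hb0, hbs, le_trans hm huk,
        fun i => (hact i).imp id (le_trans hm)⟩, hf0⟩
    obtain ⟨p, hp⟩ := IsCompact.nonempty_iInter_of_sequence_nonempty_isCompact_isClosed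
      t htsub htne ((hKcomp (εj 0)).inter_right
        (IsClosed.preimage hfcont isClosed_Iic))
      (fun j => (hKclosed (εj j)).inter (IsClosed.preimage hfcont isClosed_Iic))
    obtain ⟨x, b⟩ := p
    have hmem : ∀ j : ℕ, (x, b) ∈ t j := fun j => Set.mem_iInter.mp hp j
    obtain ⟨⟨hxΩ, hb0, hbs, -, -⟩, hfle⟩ := hmem 0
    have hxq : ∀ m ≤ q, u m x ≤ 0 := by rw [hΩ] at hxΩ; exact hxΩ
    have hzero : ∀ m ≤ q, (∀ j : ℕ, -εj j ≤ u m x) → u m x = 0 := by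
      intro m hm hall
      by_contra hne
      have hlt : 0 < -(u m x) := by
        rcases lt_or_eq_of_le (hxq m hm) with h | h
        · linarith
        · exact absurd h hne
      obtain ⟨j, hj⟩ := exists_nat_one_div_lt hlt
      have h1 := hall j
      rw [hεj] at h1
      simp only at h1
      linarith
    have hukx : u k x = 0 := hzero k hkq fun j => ((hmem j).1).2.2.2.1
    have hactive : ∀ i : Fin k, b i ≠ 0 → u (i : ℕ) x = 0 := by
      intro i hbi
      apply hzero i (hiq i)
      intro j
      rcases ((hmem j).1).2.2.2.2 i with h | h
      · exact absurd h hbi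
      · exact h
    have hinner : ∀ i : Fin k, b i ≠ 0 → ⟪N (i : ℕ), N k⟫ ≤ 0 := fun i hbi =>
      hB i k i.isLt hkq ⟨x, hxΩ, hactive i hbi, hukx⟩
    have hNk : ‖N k‖ = 1 := hN k hkq
    set v : EuclideanSpace ℝ (Fin n) := ∑ i, b i • N i with hv
    have hvV : V b = v := rfl
    set tt : ℝ := ⟪v, N k⟫ with htt
    have httle : tt ≤ 0 := by
      rw [htt, hv, sum_inner]
      apply Finset.sum_nonpos
      intro i _
      rw [real_inner_smul_left]
      rcases eq_or_ne (b i) 0 with h | h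
      · simp [h]
      · exact mul_nonpos_iff.mpr (Or.inl ⟨hb0 i, hinner i h⟩)
    have hfle0 : Real.sqrt (‖v‖ ^ 2 * ‖N k‖ ^ 2 - tt ^ 2) ≤ 0 := by
      have h1 : f (x, b) ≤ 0 := hfle
      rw [hf] at h1
      simpa [hvV, htt] using h1
    have hCS : tt ^ 2 ≤ ‖v‖ ^ 2 * ‖N k‖ ^ 2 := by
      have h := abs_real_inner_le_norm v (N k)
      have h2 : |⟪v, N k⟫| ^ 2 ≤ (‖v‖ * ‖N k‖) ^ 2 :=
        pow_le_pow_left₀ (abs_nonneg _) h 2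
      rw [sq_abs] at h2
      calc tt ^ 2 = ⟪v, N k⟫ ^ 2 := by rw [htt]
        _ ≤ (‖v‖ * ‖N k‖) ^ 2 := h2
        _ = ‖v‖ ^ 2 * ‖N k‖ ^ 2 := by ring
    have hval0 : ‖v‖ ^ 2 = tt ^ 2 := by
      have h3 : Real.sqrt (‖v‖ ^ 2 * ‖N k‖ ^ 2 - tt ^ 2) = 0 :=
        le_antisymm hfle0 (Real.sqrt_nonneg _)
      have h4 : ‖v‖ ^ 2 * ‖N k‖ ^ 2 - tt ^ 2 ≤ 0 := Real.sqrt_eq_zero'.mp h3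
      rw [hNk] at h4 hCS
      nlinarith
    have hveq : v = tt • N k := by
      have hnorm : ‖v - tt • N k‖ ^ 2 = 0 := by
        rw [norm_sub_sq_real, real_inner_smul_right, norm_smul, hNk, ← htt]
        rw [Real.norm_eq_abs, mul_one, sq_abs]
        rw [hval0]; ring
      have h5 : v - tt • N k = 0 := by
        have := pow_eq_zero_iff (n := 2) (by norm_num) |>.mp hnorm
        exact norm_eq_zero.mp this
      exact sub_eq_zero.mp h5
    have hbs' : (∑ i : Fin k, b i) = 1 := hbs
    have hb0' : ∀ i : Fin k, 0 ≤ b i := hb0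
    have hw1 : 0 ≤ ⟪v, y - x⟫ := by
      rw [hveq, real_inner_smul_left, hdiff k hkq x, hukx]
      have h6 := hyneg k hkq
      nlinarith
    have hw2 : ⟪v, y - x⟫ ≤ -(δ/2) := by
      rw [hv, sum_inner]
      have hterm : ∀ i : Fin k, i ∈ Finset.univ →
          ⟪b i • N (i : ℕ), y - x⟫ ≤ b i * (-(δ/2)) := by
        intro i _
        rw [real_inner_smul_left, hdiff i (hiq i) x]
        rcases eq_or_ne (b i) 0 with h | h
        · simp [h]
        · have h1 := hactive i h
          have h2 := hyneg i (hiq i)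
          have h3 : 0 ≤ b i := hb0' i
          rw [h1]
          nlinarith
      calc (∑ i : Fin k, ⟪b i • N (i : ℕ), y - x⟫)
          ≤ ∑ i : Fin k, b i * (-(δ/2)) := Finset.sum_le_sum hterm
        _ = (∑ i : Fin k, b i) * (-(δ/2)) := by rw [Finset.sum_mul]
        _ = -(δ/2) := by rw [hbs']; ring
    linarith
  -- assemble
  choose εf hεf cf hcf hP using key
  have hqne : (Finset.Icc 1 q).Nonempty := ⟨1, Finset.mem_Icc.mpr ⟨le_refl 1, hq⟩⟩
  set ε0 := (Finset.Icc 1 q).inf' hqne εf with hε0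
  set c0 := (Finset.Icc 1 q).inf' hqne cf with hc0
  have hε0pos : 0 < ε0 := (Finset.lt_inf'_iff hqne).mpr fun b _ => hεf b
  have hc0pos : 0 < c0 := (Finset.lt_inf'_iff hqne).mpr fun b _ => hcf b
  set Ξ := max 2 (max (2 / ε0) c0⁻¹) with hΞ
  have hΞ2 : (2 : ℝ) ≤ Ξ := le_max_left _ _
  have hΞpos : (0 : ℝ) < Ξ := lt_of_lt_of_le two_pos hΞ2
  have hΞε : 2 * Ξ⁻¹ ≤ ε0 := by
    have h1 : 2 / ε0 ≤ Ξ := le_trans (le_max_left _ _) (le_max_right _ _)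
    have h2 : (0 : ℝ) < 2 / ε0 := by positivity
    have h3 : Ξ⁻¹ ≤ (2 / ε0)⁻¹ := inv_anti₀ h2 h1
    rw [inv_div] at h3
    linarith
  have hΞc : Ξ⁻¹ ≤ c0 := by
    have h1 : c0⁻¹ ≤ Ξ := le_trans (le_max_right _ _) (le_max_right _ _)
    have h3 : Ξ⁻¹ ≤ (c0⁻¹)⁻¹ := inv_anti₀ (by positivity) h1
    rwa [inv_inv] at h3
  refine ⟨Ξ, lt_of_lt_of_le one_lt_two hΞ2, ?_⟩
  intro k hk1 hkq x hxΩ hukl huk0 a ha0 haz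
  have hkmem : k ∈ Finset.Icc 1 q := Finset.mem_Icc.mpr ⟨hk1, hkq⟩
  have hεk : ε0 ≤ εf k := Finset.inf'_le εf hkmem
  have hck : c0 ≤ cf k := Finset.inf'_le cf hkmem
  have hs0 : 0 ≤ ∑ i ∈ Finset.range k, a i :=
    Finset.sum_nonneg fun i hi => ha0 i (Finset.mem_range.mp hi)
  rcases eq_or_lt_of_le hs0 with hseq | hspos
  · rw [← hseq]
    exact mul_nonneg hΞpos.le (Real.sqrt_nonneg _)
  set s := ∑ i ∈ Finset.range k, a i with hs
  have hsne : s ≠ 0 := ne_of_gt hspos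
  set b : Fin k → ℝ := fun i => a (i : ℕ) / s with hb
  have hbi : ∀ i : Fin k, b i = a (i : ℕ) / s := fun i => rfl
  have hb0 : ∀ i : Fin k, 0 ≤ b i := fun i => div_nonneg (ha0 i i.isLt) hs0
  have hbsum : (∑ i : Fin k, b i) = 1 := by
    rw [← Finset.sum_div, ← Finset.sum_range (fun i => a i), ← hs]
    exact div_self hsne
  have hux : -εf k ≤ u k x := by
    have h2 : 2 * Ξ⁻¹ ≤ ε0 := hΞε
    have h3 : -2 * Ξ⁻¹ ≤ u k x := hukl
    linarith
  have hact : ∀ i : Fin k, b i = 0 ∨ -εf k ≤ u (i : ℕ) x := by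
    intro i
    by_cases hc : -εf k ≤ u (i : ℕ) x
    · exact Or.inr hc
    · left
      push_neg at hc
      have h4 : u (i : ℕ) x ≤ -2 * Ξ⁻¹ := by linarith
      rw [hbi i, haz i i.isLt h4, zero_div]
  have happ := hP k hk1 hkq x hxΩ hux b hb0 hbsum hact
  have hVa : (∑ i ∈ Finset.range k, a i • N i) = s • ∑ i : Fin k, b i • N (i : ℕ) := by
    rw [Finset.smul_sum, Finset.sum_range (fun i => a i • N i)]
    apply Finset.sum_congr rfl
    intro i _
    rw [hbi i, smul_smul, mul_comm s, div_mul_cancel₀ _ hsne]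
  have hz : ‖∑ i ∈ Finset.range k, a i • N i‖ ^ 2 * ‖N k‖ ^ 2 -
      ⟪∑ i ∈ Finset.range k, a i • N i, N k⟫ ^ 2 =
      s ^ 2 * (‖∑ i : Fin k, b i • N (i : ℕ)‖ ^ 2 * ‖N k‖ ^ 2 -
        ⟪∑ i : Fin k, b i • N (i : ℕ), N k⟫ ^ 2) := by
    rw [hVa, norm_smul, real_inner_smul_left, Real.norm_eq_abs, mul_pow, mul_pow, sq_abs]
    ring
  rw [hz, Real.sqrt_mul (sq_nonneg s), Real.sqrt_sq hs0]
  have h1 : Ξ⁻¹ ≤ Real.sqrt (‖∑ i : Fin k, b i • N (i : ℕ)‖ ^ 2 * ‖N k‖ ^ 2 -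
      ⟪∑ i : Fin k, b i • N (i : ℕ), N k⟫ ^ 2) := le_trans hΞc (le_trans hck happ)
  calc s = Ξ * (s * Ξ⁻¹) := by
        field_simp
      _ ≤ Ξ * (s * Real.sqrt (‖∑ i : Fin k, b i • N (i : ℕ)‖ ^ 2 * ‖N k‖ ^ 2 -
          ⟪∑ i : Fin k, b i • N (i : ℕ), N k⟫ ^ 2)) := by
        apply mul_le_mul_of_nonneg_left _ hΞpos.le
        exact mul_le_mul_of_nonneg_left h1 hspos.le
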